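/- arXiv:0906.2388 — 3 statements merged into one kernel-verified Lean document; each statement's English description precedes it below -/
import Mathlib

section
/- Let P be a generic convex coherent polygon with n ≥ 4 vertices and fix an index i. Then R_{i-1} < R_i if and only if V_{i+1} lies strictly outside the circle C_{i-1}, and R_{i-1} > R_i if and only if V_{i+1} lies strictly inside the circle C_{i-1}. (In the paper's discrete-curvature notation for convex polygons, V_{i-1} ≻ V_i holds exactly when V_{i+1} lies strictly outside C_{i-1}, so the statement reads: V_{i-1} ≻ V_i ⟺ R_{i-1} < R_i and V_{i-1} ≺ V_i ⟺ R_{i-1} > R_i.) -/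
open EuclideanGeometry
open scoped Classical

noncomputable section

/-- The Euclidean plane. -/
abbrev Pt := EuclideanSpace ℝ (Fin 2)

/-- Signed area determinant of the triangle `a b c` (positive iff `a b c` is
counterclockwise, i.e. `c` lies strictly to the left of the directed line `a → b`). -/
def det2 (a b c : Pt) : ℝ :=
  (b 0 - a 0) * (c 1 - a 1) - (b 1 - a 1) * (c 0 - a 0)

/-- The vertices `V 0, V 1, …, V (n-1)` (indices mod `n`) are distinct and in convex
position, listed counterclockwise: every other vertex lies strictly to the left of
each directed edge. -/
def ConvexCCW {n : ℕ} (V : ZMod n → Pt) : Prop :=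
  Function.Injective V ∧
    ∀ i j : ZMod n, j ≠ i → j ≠ i + 1 → 0 < det2 (V i) (V (i + 1)) (V j)

/-- The polygon is generic: no three vertices are collinear and no four vertices lie
on a common circle. -/
def GenericPoly {n : ℕ} (V : ZMod n → Pt) : Prop :=
  (∀ i j k : ZMod n, i ≠ j → j ≠ k → i ≠ k →
      ¬ Collinear ℝ ({V i, V j, V k} : Set Pt)) ∧
  (∀ i j k l : ZMod n, i ≠ j → i ≠ k → i ≠ l → j ≠ k → j ≠ l → k ≠ l →
      ¬ ∃ (O : Pt) (R : ℝ),
        dist (V i) O = R ∧ dist (V j) O = R ∧ dist (V k) O = R ∧ dist (V l) O = R)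

/-- `O i` is the center and `R i` the radius of the circle `C i` through
`V (i-1)`, `V i`, `V (i+1)`. -/
def IsCircumData {n : ℕ} (V O : ZMod n → Pt) (R : ZMod n → ℝ) : Prop :=
  ∀ i : ZMod n,
    dist (V (i - 1)) (O i) = R i ∧ dist (V i) (O i) = R i ∧
      dist (V (i + 1)) (O i) = R i

/-- The polygon is coherent: each circumcenter `O i` lies in the closed infinite cone
with apex `V i` spanned by the rays from `V i` through `V (i-1)` and `V (i+1)`. -/
def Coherent {n : ℕ} (V O : ZMod n → Pt) : Prop :=
  ∀ i : ZMod n, ∃ s t : ℝ, 0 ≤ s ∧ 0 ≤ t ∧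
    O i - V i = s • (V (i - 1) - V i) + t • (V (i + 1) - V i)

/-- `V i` is locally maximal-extremal: `V (i-2)` and `V (i+2)` lie strictly outside `C i`. -/
def LocMax {n : ℕ} (V O : ZMod n → Pt) (R : ZMod n → ℝ) (i : ZMod n) : Prop :=
  R i < dist (V (i - 2)) (O i) ∧ R i < dist (V (i + 2)) (O i)

/-- `V i` is locally minimal-extremal: `V (i-2)` and `V (i+2)` lie strictly inside `C i`. -/
def LocMin {n : ℕ} (V O : ZMod n → Pt) (R : ZMod n → ℝ) (i : ZMod n) : Prop :=
  dist (V (i - 2)) (O i) < R i ∧ dist (V (i + 2)) (O i) < R i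

/-- `V i` is globally maximal-extremal: the open disk bounded by `C i` contains no vertex. -/
def GlobMax {n : ℕ} (V O : ZMod n → Pt) (R : ZMod n → ℝ) (i : ZMod n) : Prop :=
  ∀ j : ZMod n, R i ≤ dist (V j) (O i)

/-- `V i` is globally minimal-extremal: the open disk bounded by `C i` contains every
vertex other than `V (i-1)`, `V i`, `V (i+1)`. -/
def GlobMin {n : ℕ} (V O : ZMod n → Pt) (R : ZMod n → ℝ) (i : ZMod n) : Prop :=
  ∀ j : ZMod n, j ≠ i - 1 → j ≠ i → j ≠ i + 1 → dist (V j) (O i) < R i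

/-- `V i` is radially maximal-extremal: `R (i-1) < R i > R (i+1)`. -/
def RadMax {n : ℕ} (R : ZMod n → ℝ) (i : ZMod n) : Prop :=
  R (i - 1) < R i ∧ R (i + 1) < R i

/-- `V i` is radially minimal-extremal: `R (i-1) > R i < R (i+1)`. -/
def RadMin {n : ℕ} (R : ZMod n → ℝ) (i : ZMod n) : Prop :=
  R i < R (i - 1) ∧ R i < R (i + 1)

end


section Aux

set_option maxHeartbeats 800000

private lemma auxN (e f c d : ℝ) (h : 0 < e*c - f*d) : 0 < e^2 + f^2 := by
  rcases eq_or_lt_of_le (by positivity : (0:ℝ) ≤ e^2+f^2) with h' | h'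
  · have h0 : e = 0 := by nlinarith [sq_nonneg e, sq_nonneg f]
    have h1 : f = 0 := by nlinarith [sq_nonneg e, sq_nonneg f]
    rw [h0, h1] at h; simp at h
  · exact h'

private lemma core2 (N detp T T' A B : ℝ) (hN : 0 < N) (hdetp : 0 < detp)
    (hTnn : 0 ≤ T) (hT'nn : 0 ≤ T')
    (hkey1 : N * B = 2*detp*(T - T'))
    (hkey2 : N * A = T^2 - T'^2) :
    (0 < A ↔ 0 < B) ∧ (A < 0 ↔ B < 0) := by
  constructor
  · constructor
    · intro h
      have h1 : 0 < T - T' := by nlinarith [mul_pos hN h]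
      nlinarith [mul_pos hdetp h1]
    · intro h
      have h1 : 0 < T - T' := by nlinarith [mul_pos hN h]
      have h2 : 0 < T + T' := by linarith
      nlinarith [mul_pos h1 h2]
  · constructor
    · intro h
      have h1 : T - T' < 0 := by nlinarith [mul_pos hN (neg_pos.mpr h)]
      nlinarith [mul_pos hdetp (neg_pos.mpr h1)]
    · intro h
      have h1 : T - T' < 0 := by nlinarith [mul_pos hN (neg_pos.mpr h)]
      have h2 : 0 < T + T' := by linarith
      nlinarith [mul_pos (neg_pos.mpr h1) h2]

private lemma core
 (a0 a1 b0 b1 p0 p1 q0 q1 x0 x1 y0 y1 r r' : ℝ)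
 (hay : (a0-y0)^2+(a1-y1)^2 = r'^2) (hby : (b0-y0)^2+(b1-y1)^2 = r'^2)
 (hax : (a0-x0)^2+(a1-x1)^2 = r^2) (hbx : (b0-x0)^2+(b1-x1)^2 = r^2)
 (hpx : (p0-x0)^2+(p1-x1)^2 = r^2)
 (hdetp : 0 < (b0-a0)*(p1-a1) - (b1-a1)*(p0-a0))
 (hdetq : 0 < (b0-a0)*(q1-a1) - (b1-a1)*(q0-a0))
 (s u : ℝ) (hu : 0 ≤ u)
 (hx0 : x0 - b0 = s*(a0-b0)+u*(p0-b0)) (hx1 : x1 - b1 = s*(a1-b1)+u*(p1-b1))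
 (s' u' : ℝ) (hs' : 0 ≤ s')
 (hy0 : y0 - a0 = s'*(q0-a0)+u'*(b0-a0)) (hy1 : y1 - a1 = s'*(q1-a1)+u'*(b1-a1)) :
 (r'^2 < r^2 ↔ r'^2 < (p0-y0)^2+(p1-y1)^2) ∧
 (r^2 < r'^2 ↔ (p0-y0)^2+(p1-y1)^2 < r'^2) := by
  have hT : -((x0-b0)*(b1-a1)) + (x1-b1)*(b0-a0) = u * ((b0-a0)*(p1-a1) - (b1-a1)*(p0-a0)) := by
    linear_combination (-(b1-a1))*hx0 + (b0-a0)*hx1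
  have hT' : -((y0-a0)*(b1-a1)) + (y1-a1)*(b0-a0) = s' * ((b0-a0)*(q1-a1) - (b1-a1)*(q0-a0)) := by
    linear_combination (-(b1-a1))*hy0 + (b0-a0)*hy1
  have hN : 0 < (b0-a0)^2+(b1-a1)^2 := auxN _ _ _ _ hdetp
  have hE : (x0-y0)*(b0-a0) + (x1-y1)*(b1-a1) = 0 := by
    linear_combination (hax - hbx - hay + hby)/2
  have hPow : (p0-y0)^2+(p1-y1)^2 - r'^2 = 2*((p0-a0)*(x0-y0)+(p1-a1)*(x1-y1)) := by
    linear_combination hay + hpx - hax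
  have hkey1 : ((b0-a0)^2+(b1-a1)^2) * ((p0-y0)^2+(p1-y1)^2 - r'^2)
      = 2*((b0-a0)*(p1-a1) - (b1-a1)*(p0-a0))
        *((-((x0-b0)*(b1-a1)) + (x1-b1)*(b0-a0)) - (-((y0-a0)*(b1-a1)) + (y1-a1)*(b0-a0))) := by
    linear_combination ((b0-a0)^2+(b1-a1)^2) * hPow + (2*((p0-a0)*(b0-a0)+(p1-a1)*(b1-a1))) * hE
  have hkey2 : ((b0-a0)^2+(b1-a1)^2)*(r^2 - r'^2)
      = (-((x0-b0)*(b1-a1)) + (x1-b1)*(b0-a0))^2 - (-((y0-a0)*(b1-a1)) + (y1-a1)*(b0-a0))^2 := by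
    linear_combination (-((b0-a0)^2+(b1-a1)^2))*hbx + ((b0-a0)^2+(b1-a1)^2)*hby
      + ((x0+y0-2*b0)*(b0-a0)+(x1+y1-2*b1)*(b1-a1))*hE
  have h2 := core2 ((b0-a0)^2+(b1-a1)^2) ((b0-a0)*(p1-a1) - (b1-a1)*(p0-a0))
      (-((x0-b0)*(b1-a1)) + (x1-b1)*(b0-a0)) (-((y0-a0)*(b1-a1)) + (y1-a1)*(b0-a0))
      (r^2 - r'^2) ((p0-y0)^2+(p1-y1)^2 - r'^2) hN hdetp
      (by rw [hT]; exact mul_nonneg hu hdetp.le)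
      (by rw [hT']; exact mul_nonneg hs' hdetq.le) hkey1 hkey2
  constructor
  · rw [show (r'^2 < r^2) ↔ 0 < r^2 - r'^2 by constructor <;> intro <;> linarith,
        show (r'^2 < (p0-y0)^2+(p1-y1)^2) ↔ 0 < (p0-y0)^2+(p1-y1)^2 - r'^2 by
          constructor <;> intro <;> linarith]
    exact h2.1
  · rw [show (r^2 < r'^2) ↔ r^2 - r'^2 < 0 by constructor <;> intro <;> linarith,
        show ((p0-y0)^2+(p1-y1)^2 < r'^2) ↔ (p0-y0)^2+(p1-y1)^2 - r'^2 < 0 by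
          constructor <;> intro <;> linarith]
    exact h2.2

private lemma dist_sq' (x y : Pt) : dist x y ^ 2 = (x 0 - y 0)^2 + (x 1 - y 1)^2 := by
  rw [EuclideanSpace.dist_eq, Real.sq_sqrt (by positivity)]
  simp [Fin.sum_univ_two, Real.dist_eq, sq_abs]

private lemma lt_iff_sq_lt {x y : ℝ} (hx : 0 ≤ x) (hy : 0 ≤ y) : x < y ↔ x^2 < y^2 := by
  constructor <;> intro h <;> nlinarith

end Aux

/-- In a generic convex coherent polygon with at least four vertices:
`R (i-1) < R i` iff `V (i+1)` lies strictly outside the circle `C (i-1)`, and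
`R (i-1) > R i` iff `V (i+1)` lies strictly inside the circle `C (i-1)`. -/
theorem radius_compare_iff_outside_inside
    (n : ℕ) [NeZero n] (hn : 4 ≤ n)
    (V O : ZMod n → Pt) (R : ZMod n → ℝ)
    (hconv : ConvexCCW V) (hgen : GenericPoly V) (hcirc : IsCircumData V O R)
    (hcoh : Coherent V O) (i : ZMod n) :
    (R (i - 1) < R i ↔ R (i - 1) < dist (V (i + 1)) (O (i - 1))) ∧
    (R i < R (i - 1) ↔ dist (V (i + 1)) (O (i - 1)) < R (i - 1)) := by
  obtain ⟨hinj, hdet⟩ := hconv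
  have e1 : i - 1 + 1 = i := by ring
  have e2 : i - 1 - 1 = i - 2 := by ring
  have h1 : (1 : ZMod n) ≠ 0 := by
    intro h
    have := Nat.le_of_dvd one_pos ((ZMod.natCast_eq_zero_iff 1 n).mp (by exact_mod_cast h))
    omega
  have h2 : (2 : ZMod n) ≠ 0 := by
    intro h
    have := Nat.le_of_dvd two_pos ((ZMod.natCast_eq_zero_iff 2 n).mp (by exact_mod_cast h))
    omega
  have hc1 := hcirc (i - 1)
  rw [e1, e2] at hc1
  obtain ⟨hq, ha, hb⟩ := hc1
  obtain ⟨ha', hb', hp'⟩ := hcirc i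
  obtain ⟨s, u, hs, hu, hcx⟩ := hcoh i
  obtain ⟨s', u', hs', hu', hcy⟩ := hcoh (i - 1)
  rw [e1, e2] at hcy
  have hdetp : 0 < det2 (V (i-1)) (V i) (V (i+1)) := by
    have := hdet (i-1) (i+1) (fun h => h2 (by linear_combination h))
      (by rw [e1]; exact fun h => h1 (by linear_combination h))
    rwa [e1] at this
  have hdetq : 0 < det2 (V (i-1)) (V i) (V (i-2)) := by
    have := hdet (i-1) (i-2) (fun h => h1 (by linear_combination -h))
      (by rw [e1]; exact fun h => h2 (by linear_combination -h))
    rwa [e1] at this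
  simp only [det2] at hdetp hdetq
  have sq_of : ∀ (x y : Pt) (c : ℝ), dist x y = c →
      (x 0 - y 0)^2 + (x 1 - y 1)^2 = c^2 := fun x y c h => by rw [← dist_sq', h]
  have hcx0 : O i 0 - V i 0 = s * (V (i-1) 0 - V i 0) + u * (V (i+1) 0 - V i 0) := by
    simpa using congrArg (· 0) hcx
  have hcx1 : O i 1 - V i 1 = s * (V (i-1) 1 - V i 1) + u * (V (i+1) 1 - V i 1) := by
    simpa using congrArg (· 1) hcx
  have hcy0 : O (i-1) 0 - V (i-1) 0
      = s' * (V (i-2) 0 - V (i-1) 0) + u' * (V i 0 - V (i-1) 0) := by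
    simpa using congrArg (· 0) hcy
  have hcy1 : O (i-1) 1 - V (i-1) 1
      = s' * (V (i-2) 1 - V (i-1) 1) + u' * (V i 1 - V (i-1) 1) := by
    simpa using congrArg (· 1) hcy
  have hcore := core (V (i-1) 0) (V (i-1) 1) (V i 0) (V i 1) (V (i+1) 0) (V (i+1) 1)
      (V (i-2) 0) (V (i-2) 1) (O i 0) (O i 1) (O (i-1) 0) (O (i-1) 1) (R i) (R (i-1))
      (sq_of _ _ _ ha) (sq_of _ _ _ hb) (sq_of _ _ _ ha') (sq_of _ _ _ hb') (sq_of _ _ _ hp')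
      hdetp hdetq s u hu hcx0 hcx1 s' u' hs' hcy0 hcy1
  have hr : 0 ≤ R i := by rw [← hb']; exact dist_nonneg
  have hr' : 0 ≤ R (i-1) := by rw [← ha]; exact dist_nonneg
  have hD : 0 ≤ dist (V (i+1)) (O (i-1)) := dist_nonneg
  constructor
  · rw [lt_iff_sq_lt hr' hr, lt_iff_sq_lt hr' hD, dist_sq']
    exact hcore.1
  · rw [lt_iff_sq_lt hr hr', lt_iff_sq_lt hD hr', dist_sq']
    exact hcore.2
end

section
/- (Global Four-Vertex Theorem) Every generic convex polygon P with n ≥ 4 vertices has at least four globally extremal vertices; in fact s_-(P) ≥ 2 and s_+(P) ≥ 2. -/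
open EuclideanGeometry
open scoped Classical

noncomputable section
namespace FourV

lemma det2_cyc (a b c : Pt) : det2 a b c = det2 b c a := by simp only [det2]; ring

lemma crossid (A P Q U : Pt) :
    det2 A P Q * ((U 0 - A 0)^2 + (U 1 - A 1)^2)
      = ((P 0 - A 0)*(U 0 - A 0) + (P 1 - A 1)*(U 1 - A 1)) * det2 A U Q
        - ((Q 0 - A 0)*(U 0 - A 0) + (Q 1 - A 1)*(U 1 - A 1)) * det2 A U P := by
  simp only [det2]; ring

lemma castinj {n : ℕ} [NeZero n] {s t : ℕ} (hs : s < n) (ht : t < n)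
    (h : (s : ZMod n) = t) : s = t := by
  have := congrArg ZMod.val h
  rwa [ZMod.val_cast_of_lt hs, ZMod.val_cast_of_lt ht] at this

lemma nsq_pos {x y : Pt} (h : x ≠ y) : 0 < (x 0 - y 0)^2 + (x 1 - y 1)^2 := by
  by_contra hc
  push_neg at hc
  have h0 : x 0 = y 0 := by nlinarith [sq_nonneg (x 0 - y 0), sq_nonneg (x 1 - y 1)]
  have h1 : x 1 = y 1 := by nlinarith [sq_nonneg (x 0 - y 0), sq_nonneg (x 1 - y 1)]
  exact h (PiLp.ext fun i => by fin_cases i <;> assumption)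

section Poly
variable {n : ℕ} [NeZero n] {V : ZMod n → Pt} (hconv : ConvexCCW V)

lemma cast_ne_zero {m : ℕ} (h1 : 1 ≤ m) (h2 : m < n) : (m : ZMod n) ≠ 0 := by
  intro h
  have : m = 0 := castinj h2 (Nat.pos_of_ne_zero (NeZero.ne n)) (by simpa using h)
  omega

lemma add_cast_ne {b : ZMod n} {m : ℕ} (h1 : 1 ≤ m) (h2 : m < n) :
    b + (m : ZMod n) ≠ b := by
  intro h
  exact cast_ne_zero h1 h2 (by linear_combination h - b)

include hconv

lemma chordside (a : ZMod n) {p q : ℕ} (hp : 1 ≤ p) (hpq : p < q) (hq : q < n) :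
    0 < det2 (V a) (V (a + (p : ZMod n))) (V (a + (q : ZMod n))) := by
  have hn3 : 3 ≤ n := by omega
  set A := V a with hA
  set W : ℕ → Pt := fun m => V (a + (m : ZMod n)) with hW
  have hW1 : W 1 = V (a + 1) := by norm_num [hW]
  -- F1 : halfplane condition
  have F1 : ∀ m : ℕ, 2 ≤ m → m < n → 0 < det2 A (W 1) (W m) := by
    intro m h2 hmn
    rw [hW1]
    refine hconv.2 a (a + (m : ZMod n)) (add_cast_ne (by omega) hmn) ?_
    intro h
    have : (m : ZMod n) = ((1 : ℕ) : ZMod n) := by push_cast; linear_combination h - a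
    have := castinj hmn (by omega) this
    omega
  -- F2 : consecutive edges
  have F2 : ∀ m : ℕ, 1 ≤ m → m + 1 < n → 0 < det2 A (W m) (W (m + 1)) := by
    intro m h1 hmn
    have h2 := hconv.2 (a + (m : ZMod n)) a
      (fun h => add_cast_ne h1 (by omega) h.symm)
      (by
        intro h
        have : ((m + 1 : ℕ) : ZMod n) = 0 := by push_cast; linear_combination a - h
        exact cast_ne_zero (by omega) hmn this)
    have e1 : a + (m : ZMod n) + 1 = a + ((m + 1 : ℕ) : ZMod n) := by push_cast; ring
    rw [e1] at h2
    calc (0:ℝ) < det2 (V (a + (m:ZMod n))) (V (a + ((m+1:ℕ) : ZMod n))) (V a) := h2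
    _ = det2 A (W m) (W (m+1)) := by rw [hA, hW, det2_cyc, det2_cyc]
  have hU : W 1 ≠ A := by
    rw [hW1, hA]; intro h
    have h1n : (1:ℕ) < n := by omega
    exact add_cast_ne (n := n) (b := a) (m := 1) le_rfl h1n (by
      rw [Nat.cast_one]; exact hconv.1 h)
  have nsq1 : 0 < (W 1 0 - A 0)^2 + (W 1 1 - A 1)^2 := nsq_pos hU
  set dotf : ℕ → ℝ := fun m =>
    (W m 0 - A 0)*(W 1 0 - A 0) + (W m 1 - A 1)*(W 1 1 - A 1) with hdotf
  set D1 : ℕ → ℝ := fun m => det2 A (W 1) (W m) with hD1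
  set ord : ℕ → ℕ → ℝ := fun m m' => dotf m * D1 m' - dotf m' * D1 m with hord
  have key : ∀ m m' : ℕ,
      det2 A (W m) (W m') * ((W 1 0 - A 0)^2 + (W 1 1 - A 1)^2) = ord m m' := by
    intro m m'
    rw [hord, hdotf, hD1]
    exact crossid A (W m) (W m') (W 1)
  have transo : ∀ m m' m'' : ℕ,
      ord m m'' * D1 m' = ord m m' * D1 m'' + ord m' m'' * D1 m := by
    intro m m' m''
    rw [hord]; ring
  have step : ∀ m : ℕ, 1 ≤ m → m + 1 < n → 0 < ord m (m+1) := by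
    intro m h1 hmn
    rw [← key]
    exact mul_pos (F2 m h1 hmn) nsq1
  have chain : ∀ q p : ℕ, 2 ≤ p → p < q → q < n → 0 < ord p q := by
    intro q
    induction q with
    | zero => omega
    | succ q ih =>
      intro p hp hpq hq
      rcases eq_or_lt_of_le (Nat.lt_succ_iff.mp hpq) with h | h
      · subst h; exact step p (by omega) hq
      · have h1 : 0 < ord p q := ih p hp h (by omega)
        have h2 : 0 < ord q (q+1) := step q (by omega) hq
        have h3 := transo p q (q+1)
        have d1 : 0 < D1 p := F1 p hp (by omega)
        have d2 : 0 < D1 q := F1 q (by omega) (by omega)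
        have d3 : 0 < D1 (q+1) := F1 (q+1) (by omega) hq
        nlinarith
  have goal2 : ∀ m m' : ℕ, 0 < ord m m' → 0 < det2 A (W m) (W m') := by
    intro m m' h
    have := key m m'
    nlinarith
  rcases eq_or_lt_of_le hp with h1 | h1
  · -- p = 1
    have := F1 q (by omega) hq
    rw [← h1]
    calc (0:ℝ) < det2 A (W 1) (W q) := this
    _ = det2 A (W 1) (W q) := rfl
  · exact goal2 p q (chain q p h1 hpq hq)

end Poly
end FourV

namespace FourV

def P4 (a b c d : Pt) : ℝ :=
  (a 0^2 + a 1^2) * det2 b c d - (b 0^2 + b 1^2) * det2 a c d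
  + (c 0^2 + c 1^2) * det2 a b d - (d 0^2 + d 1^2) * det2 a b c

lemma det2_swap12 (a b c : Pt) : det2 a b c = -det2 b a c := by simp only [det2]; ring
lemma det2_swap13 (a b c : Pt) : det2 a b c = -det2 c b a := by simp only [det2]; ring
lemma p4_swap13 (a b c d : Pt) : P4 a b c d = -P4 c b a d := by simp only [P4, det2]; ring
lemma p4_swap23 (a b c d : Pt) : P4 a b c d = -P4 a c b d := by simp only [P4, det2]; ring
lemma p4_swap34 (a b c d : Pt) : P4 a b c d = -P4 a b d c := by simp only [P4, det2]; ring
lemma p4_cyc3 (a b c d : Pt) : P4 a b c d = P4 b c a d := by simp only [P4, det2]; ring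
lemma p4_rep1 (a b c : Pt) : P4 a b c a = 0 := by simp only [P4, det2]; ring
lemma p4_rep2 (a b c : Pt) : P4 a b c b = 0 := by simp only [P4, det2]; ring
lemma pencil (e : ℝ) (a b x y z : Pt) :
    det2 a b z * (e * P4 a b x y) - det2 a b y * (e * P4 a b x z)
      + det2 a b x * (e * P4 a b y z) = 0 := by
  simp only [P4, det2]; ring

/-- The circle through vertices at offsets `q, p, s` (from base `b`) has no vertex
strictly on its `ε`-side. -/
def Seeded {n : ℕ} (V : ZMod n → Pt) (e : ℝ) (b : ZMod n) (p q s : ℕ) : Prop :=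
  ∀ j, e * P4 (V (b + (q : ZMod n))) (V (b + (p : ZMod n))) (V (b + (s : ZMod n))) (V j) ≤ 0

def EarW {n : ℕ} (V : ZMod n → Pt) (e : ℝ) (i : ZMod n) : Prop :=
  ∀ j, e * P4 (V (i - 1)) (V i) (V (i + 1)) (V j) ≤ 0

section Poly2
variable {n : ℕ} [NeZero n] {V : ZMod n → Pt} (hconv : ConvexCCW V)

lemma idx_add (b : ZMod n) {p t : ℕ} (h : p ≤ t) :
    (b + (p : ZMod n)) + ((t - p : ℕ) : ZMod n) = b + (t : ZMod n) := by
  rw [Nat.cast_sub h]; ring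

lemma exists_offset (b j : ZMod n) : ∃ t : ℕ, t < n ∧ j = b + (t : ZMod n) :=
  ⟨(j - b).val, ZMod.val_lt _, by rw [ZMod.natCast_val, ZMod.cast_id]; ring⟩

include hconv

lemma Dpos (b : ZMod n) {p q t : ℕ} (h1 : p < t) (h2 : t < q) (hq : q < n) :
    0 < det2 (V (b + (q : ZMod n))) (V (b + (p : ZMod n))) (V (b + (t : ZMod n))) := by
  have h := chordside hconv (b + (p : ZMod n)) (p := t - p) (q := q - p)
    (by omega) (by omega) (by omega)
  rw [idx_add b (by omega : p ≤ t), idx_add b (by omega : p ≤ q)] at h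
  calc (0:ℝ) < det2 (V (b + (p:ZMod n))) (V (b + (t:ZMod n))) (V (b + (q:ZMod n))) := h
  _ = _ := by simp only [det2]; ring

lemma Dneg (b : ZMod n) {p q t : ℕ} (hpq : p < q) (hq : q < n) (ht : t < n)
    (hout : t < p ∨ q < t) :
    det2 (V (b + (q : ZMod n))) (V (b + (p : ZMod n))) (V (b + (t : ZMod n))) < 0 := by
  rcases hout with h | h
  · have h2 := chordside hconv (b + (t : ZMod n)) (p := p - t) (q := q - t)
      (by omega) (by omega) (by omega)
    rw [idx_add b (by omega : t ≤ p), idx_add b (by omega : t ≤ q)] at h2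
    rw [det2_swap13]; linarith
  · have h2 := chordside hconv (b + (p : ZMod n)) (p := q - p) (q := t - p)
      (by omega) (by omega) (by omega)
    rw [idx_add b (by omega : p ≤ q), idx_add b (by omega : p ≤ t)] at h2
    rw [det2_swap12]; linarith

lemma seedStep (e : ℝ) (b : ZMod n) (p q r : ℕ) (hpq : p + 2 ≤ q) (hq : q < n)
    (hr : r < p ∨ (q < r ∧ r < n))
    (hpar : ∀ j, 0 ≤ e * P4 (V (b + (q : ZMod n))) (V (b + (p : ZMod n)))
      (V (b + (r : ZMod n))) (V j)) :
    ∃ s, p + 1 ≤ s ∧ s ≤ q - 1 ∧ Seeded V e b p q s := by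
  set A := V (b + (q : ZMod n)) with hA
  set B := V (b + (p : ZMod n)) with hB
  set Wt : ℕ → Pt := fun t => V (b + (t : ZMod n)) with hWt
  set D : ℕ → ℝ := fun t => det2 A B (Wt t) with hD
  have hrn : r < n := by rcases hr with h | ⟨_, h⟩ <;> omega
  have hDr : D r < 0 := Dneg hconv b (by omega) hq hrn (by omega)
  have hDpos : ∀ t, p < t → t < q → 0 < D t := fun t h1 h2 => Dpos hconv b h1 h2 hq
  set κ : ℕ → ℝ := fun t => (e * P4 A B (Wt t) (Wt r)) / D t with hκ
  have hLne : (Finset.Icc (p+1) (q-1)).Nonempty := by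
    refine ⟨p+1, Finset.mem_Icc.mpr ⟨le_rfl, by omega⟩⟩
  obtain ⟨s, hsL, hsmax⟩ := Finset.exists_max_image (Finset.Icc (p+1) (q-1)) κ hLne
  rw [Finset.mem_Icc] at hsL
  have hDs : 0 < D s := hDpos s (by omega) (by omega)
  -- numerator formulas
  have hnum : ∀ t, p < t → t < q → e * P4 A B (Wt t) (Wt r) = κ t * D t := by
    intro t h1 h2
    simp only [hκ]
    exact (div_mul_cancel₀ _ (hDpos t h1 h2).ne').symm
  -- s* vs r
  have hsr : e * P4 A B (Wt s) (Wt r) ≤ 0 := by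
    have h1 := hpar (b + (s : ZMod n))
    rw [p4_swap34]
    simp only [hA, hB, hWt] at *
    linarith
  refine ⟨s, hsL.1, hsL.2, ?_⟩
  intro j
  obtain ⟨t, htn, rfl⟩ := exists_offset b j
  by_cases hterm : t = p
  · subst hterm
    show e * P4 A B (Wt s) B ≤ 0
    rw [p4_rep2, mul_zero]
  by_cases hterm2 : t = q
  · subst hterm2
    show e * P4 A B (Wt s) A ≤ 0
    rw [p4_rep1, mul_zero]
  by_cases hterm3 : t = r
  · subst hterm3; exact hsr
  have hpen := pencil e A B (Wt s) (Wt t) (Wt r)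
  by_cases hin : p < t ∧ t < q
  · -- t in the chain
    have hDt : 0 < D t := hDpos t hin.1 hin.2
    have hκle : κ t ≤ κ s := hsmax t (Finset.mem_Icc.mpr ⟨by omega, by omega⟩)
    have e1 : e * P4 A B (Wt s) (Wt r) = κ s * D s := hnum s (by omega) (by omega)
    have e2 : e * P4 A B (Wt t) (Wt r) = κ t * D t := hnum t hin.1 hin.2
    -- hpen : D r * (e*P4 A B (Wt s) (Wt t)) - D t * (e*P4 A B (Wt s) (Wt r)) + D s * (e*P4 A B (Wt t) (Wt r)) = 0
    show e * P4 A B (Wt s) (Wt t) ≤ 0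
    nlinarith [mul_pos hDt hDs, mul_nonneg (mul_pos hDt hDs).le (sub_nonneg.mpr hκle)]
  · -- t outside
    have hDt : D t < 0 := by
      refine Dneg hconv b (by omega) hq htn (by omega)
    have htr : e * P4 A B (Wt t) (Wt r) ≤ 0 := by
      have h1 := hpar (b + (t : ZMod n))
      rw [p4_swap34]
      simp only [hA, hB, hWt] at *
      linarith
    show e * P4 A B (Wt s) (Wt t) ≤ 0
    nlinarith [mul_nonneg (neg_nonneg.mpr hDt.le) (neg_nonneg.mpr htr),
      mul_nonneg hDs.le (neg_nonneg.mpr htr),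
      mul_nonneg (neg_nonneg.mpr hDt.le) (neg_nonneg.mpr hsr)]

lemma baseSeed (e : ℝ) (b : ZMod n) (hn : 3 ≤ n) :
    ∃ s, 1 ≤ s ∧ s ≤ n - 2 ∧ Seeded V e b 0 (n-1) s := by
  set A := V (b + ((n-1 : ℕ) : ZMod n)) with hA
  set B := V (b + ((0 : ℕ) : ZMod n)) with hB
  set Wt : ℕ → Pt := fun t => V (b + (t : ZMod n)) with hWt
  set D : ℕ → ℝ := fun t => det2 A B (Wt t) with hD
  have hDpos : ∀ t, 0 < t → t < n - 1 → 0 < D t := fun t h1 h2 =>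
    Dpos hconv b h1 h2 (by omega)
  have hD1 : 0 < D 1 := hDpos 1 (by omega) (by omega)
  set κ : ℕ → ℝ := fun t => (e * P4 A B (Wt t) (Wt 1)) / D t with hκ
  have hLne : (Finset.Icc 1 (n-2)).Nonempty :=
    ⟨1, Finset.mem_Icc.mpr ⟨le_rfl, by omega⟩⟩
  obtain ⟨s, hsL, hsmin⟩ := Finset.exists_min_image (Finset.Icc 1 (n-2)) κ hLne
  rw [Finset.mem_Icc] at hsL
  have hDs : 0 < D s := hDpos s (by omega) (by omega)
  have hnum : ∀ t, 0 < t → t < n - 1 → e * P4 A B (Wt t) (Wt 1) = κ t * D t := by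
    intro t h1 h2
    simp only [hκ]
    exact (div_mul_cancel₀ _ (hDpos t h1 h2).ne').symm
  refine ⟨s, hsL.1, hsL.2, ?_⟩
  intro j
  obtain ⟨t, htn, rfl⟩ := exists_offset b j
  by_cases hterm : t = 0
  · subst hterm
    show e * P4 A B (Wt s) B ≤ 0
    rw [p4_rep2, mul_zero]
  by_cases hterm2 : t = n - 1
  · subst hterm2
    show e * P4 A B (Wt s) A ≤ 0
    rw [p4_rep1, mul_zero]
  have hin1 : 0 < t := by omega
  have hin2 : t < n - 1 := by omega
  have hDt : 0 < D t := hDpos t hin1 hin2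
  have hκle : κ s ≤ κ t := hsmin t (Finset.mem_Icc.mpr ⟨by omega, by omega⟩)
  have e1 : e * P4 A B (Wt s) (Wt 1) = κ s * D s := hnum s (by omega) (by omega)
  have e2 : e * P4 A B (Wt t) (Wt 1) = κ t * D t := hnum t hin1 hin2
  have hpen := pencil e A B (Wt s) (Wt t) (Wt 1)
  show e * P4 A B (Wt s) (Wt t) ≤ 0
  nlinarith [mul_pos hDt hDs, mul_nonneg (mul_pos hDt hDs).le (sub_nonneg.mpr hκle)]

lemma earRegion (e : ℝ) (b : ZMod n) :
    ∀ d p q s : ℕ, q - p = d → p + 2 ≤ q → q < n → p + 1 ≤ s → s ≤ q - 1 →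
      Seeded V e b p q s →
      ∃ x, p + 1 ≤ x ∧ x ≤ q - 1 ∧ EarW V e (b + (x : ZMod n)) := by
  intro d
  induction d using Nat.strong_induction_on with
  | _ d ih =>
    intro p q s hd h2 hq hs1 hs2 hseed
    by_cases hbase : q = p + 2
    · have hsval : s = p + 1 := by omega
      subst hsval
      subst hbase
      refine ⟨p+1, le_rfl, by omega, ?_⟩
      intro j
      have e1 : b + ((p+1 : ℕ) : ZMod n) - 1 = b + ((p : ℕ) : ZMod n) := by
        push_cast; ring
      have e2 : b + ((p+1 : ℕ) : ZMod n) + 1 = b + ((p+2 : ℕ) : ZMod n) := by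
        push_cast; ring
      rw [e1, e2, ← p4_cyc3]
      exact hseed j
    · by_cases hs : p + 2 ≤ s
      · have hpar : ∀ j, 0 ≤ e * P4 (V (b + (s : ZMod n))) (V (b + (p : ZMod n)))
            (V (b + (q : ZMod n))) (V j) := by
          intro j
          rw [p4_swap13, mul_neg, neg_nonneg]
          exact hseed j
        obtain ⟨s', hs1', hs2', hseed'⟩ := seedStep hconv e b p s q (by omega) (by omega)
          (Or.inr ⟨by omega, hq⟩) hpar
        obtain ⟨x, hx1, hx2, hear⟩ := ih (s - p) (by omega) p s s' rfl (by omega)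
          (by omega) hs1' hs2' hseed'
        exact ⟨x, hx1, by omega, hear⟩
      · have hsval : s = p + 1 := by omega
        subst hsval
        have hpar : ∀ j, 0 ≤ e * P4 (V (b + (q : ZMod n))) (V (b + ((p+1 : ℕ) : ZMod n)))
            (V (b + (p : ZMod n))) (V j) := by
          intro j
          rw [p4_swap23, mul_neg, neg_nonneg]
          exact hseed j
        obtain ⟨s', hs1', hs2', hseed'⟩ := seedStep hconv e b (p+1) q p (by omega) hq
          (Or.inl (by omega)) hpar
        obtain ⟨x, hx1, hx2, hear⟩ := ih (q - (p+1)) (by omega) (p+1) q s' rfl (by omega)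
          hq hs1' hs2' hseed'
        exact ⟨x, by omega, hx2, hear⟩

lemma twoEars (e : ℝ) (hn : 4 ≤ n) :
    ∃ i j : ZMod n, i ≠ j ∧ EarW V e i ∧ EarW V e j := by
  set b : ZMod n := 0 with hb
  obtain ⟨s0, hs1, hs2, hseed⟩ := baseSeed hconv e b (by omega)
  have hn1 : ((n - 1 : ℕ) : ZMod n) = -1 := by
    rw [Nat.cast_sub (by omega : 1 ≤ n), ZMod.natCast_self, Nat.cast_one]; ring
  have hn2 : ((n - 2 : ℕ) : ZMod n) = -2 := by
    rw [Nat.cast_sub (by omega : 2 ≤ n), ZMod.natCast_self]; push_cast; ring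
  by_cases hc1 : s0 = 1
  · subst hc1
    -- ear at b
    have ear1 : EarW V e b := by
      intro j
      have h := hseed j
      have i1 : b + ((n-1 : ℕ) : ZMod n) = b - 1 := by rw [hn1]; ring
      have i2 : b + ((0 : ℕ) : ZMod n) = b := by push_cast; ring
      have i3 : b + ((1 : ℕ) : ZMod n) = b + 1 := by push_cast; ring
      rw [i1, i2, i3] at h
      exact h
    have hpar : ∀ j, 0 ≤ e * P4 (V (b + ((n-1 : ℕ) : ZMod n))) (V (b + ((1:ℕ) : ZMod n)))
        (V (b + ((0:ℕ) : ZMod n))) (V j) := by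
      intro j
      rw [p4_swap23, mul_neg, neg_nonneg]
      exact hseed j
    obtain ⟨s', hs1', hs2', hseed'⟩ := seedStep hconv e b 1 (n-1) 0 (by omega) (by omega)
      (Or.inl (by omega)) hpar
    obtain ⟨x, hx1, hx2, hear⟩ := earRegion hconv e b (n - 2) 1 (n-1) s' (by omega)
      (by omega) (by omega) hs1' hs2' hseed'
    refine ⟨b, b + (x : ZMod n), ?_, ear1, hear⟩
    exact fun h => add_cast_ne (n := n) (by omega : 1 ≤ x) (by omega : x < n) h.symm
  · by_cases hc2 : s0 = n - 2
    · subst hc2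
      have ear1 : EarW V e (b + ((n-1 : ℕ) : ZMod n)) := by
        intro j
        have h := hseed j
        have i1 : b + ((n-1 : ℕ) : ZMod n) - 1 = b + ((n-2 : ℕ) : ZMod n) := by
          rw [hn1, hn2]; ring
        have i2 : b + ((n-1 : ℕ) : ZMod n) + 1 = b + ((0 : ℕ) : ZMod n) := by
          rw [hn1]; push_cast; ring
        rw [i1, i2, p4_cyc3]
        exact h
      have hpar : ∀ j, 0 ≤ e * P4 (V (b + ((n-2:ℕ) : ZMod n))) (V (b + ((0:ℕ) : ZMod n)))
          (V (b + ((n-1:ℕ) : ZMod n))) (V j) := by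
        intro j
        rw [p4_swap13, mul_neg, neg_nonneg]
        exact hseed j
      obtain ⟨s', hs1', hs2', hseed'⟩ := seedStep hconv e b 0 (n-2) (n-1) (by omega)
        (by omega) (Or.inr ⟨by omega, by omega⟩) hpar
      obtain ⟨x, hx1, hx2, hear⟩ := earRegion hconv e b (n - 2) 0 (n-2) s' (by omega)
        (by omega) (by omega) hs1' hs2' hseed'
      refine ⟨b + ((n-1 : ℕ) : ZMod n), b + (x : ZMod n), ?_, ear1, hear⟩
      intro h
      have := add_left_cancel h
      have := castinj (by omega : n - 1 < n) (by omega : x < n) this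
      omega
    · -- middle case
      have hm1 : 2 ≤ s0 := by omega
      have hm2 : s0 ≤ n - 3 := by omega
      have hparA : ∀ j, 0 ≤ e * P4 (V (b + (s0 : ZMod n))) (V (b + ((0:ℕ) : ZMod n)))
          (V (b + ((n-1:ℕ) : ZMod n))) (V j) := by
        intro j
        rw [p4_swap13, mul_neg, neg_nonneg]
        exact hseed j
      obtain ⟨s1', hl1, hl2, hseedA⟩ := seedStep hconv e b 0 s0 (n-1) (by omega)
        (by omega) (Or.inr ⟨by omega, by omega⟩) hparA
      obtain ⟨x1, hx11, hx12, hear1⟩ := earRegion hconv e b s0 0 s0 s1' (by omega)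
        (by omega) (by omega) hl1 hl2 hseedA
      have hparB : ∀ j, 0 ≤ e * P4 (V (b + ((n-1:ℕ) : ZMod n))) (V (b + (s0 : ZMod n)))
          (V (b + ((0:ℕ)  : ZMod n))) (V j) := by
        intro j
        rw [p4_swap23, mul_neg, neg_nonneg]
        exact hseed j
      obtain ⟨s2', hr1, hr2, hseedB⟩ := seedStep hconv e b s0 (n-1) 0 (by omega)
        (by omega) (Or.inl (by omega)) hparB
      obtain ⟨x2, hx21, hx22, hear2⟩ := earRegion hconv e b (n - 1 - s0) s0 (n-1) s2'
        (by omega) (by omega) (by omega) hr1 hr2 hseedB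
      refine ⟨b + (x1 : ZMod n), b + (x2 : ZMod n), ?_, hear1, hear2⟩
      intro h
      have := add_left_cancel h
      have := castinj (by omega : x1 < n) (by omega : x2 < n) this
      omega

end Poly2

lemma dist_sq (x y : Pt) : (dist x y)^2 = (x 0 - y 0)^2 + (x 1 - y 1)^2 := by
  rw [EuclideanSpace.dist_eq, Real.sq_sqrt (by positivity)]
  simp [Fin.sum_univ_two, Real.dist_eq, sq_abs]

lemma p4_circum {a b c d O : Pt} {R : ℝ} (ha : dist a O = R) (hb : dist b O = R)
    (hc : dist c O = R) :
    P4 a b c d = det2 a b c * (R^2 - dist d O ^ 2) := by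
  have ha' : (a 0 - O 0)^2 + (a 1 - O 1)^2 = R^2 := by rw [← dist_sq, ha]
  have hb' : (b 0 - O 0)^2 + (b 1 - O 1)^2 = R^2 := by rw [← dist_sq, hb]
  have hc' : (c 0 - O 0)^2 + (c 1 - O 1)^2 = R^2 := by rw [← dist_sq, hc]
  rw [dist_sq]
  simp only [P4, det2]
  linear_combination
    ((c 0 - b 0) * (d 1 - b 1) - (c 1 - b 1) * (d 0 - b 0)) * ha'
    - ((c 0 - a 0) * (d 1 - a 1) - (c 1 - a 1) * (d 0 - a 0)) * hb'
    + ((b 0 - a 0) * (d 1 - a 1) - (b 1 - a 1) * (d 0 - a 0)) * hc'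

end FourV

end

/-- Global Four-Vertex Theorem: every generic convex polygon with at least four vertices
has at least two globally maximal-extremal and two globally minimal-extremal vertices,
hence at least four globally extremal vertices. -/
theorem global_four_vertex
    (n : ℕ) [NeZero n] (hn : 4 ≤ n)
    (V O : ZMod n → Pt) (R : ZMod n → ℝ)
    (hconv : ConvexCCW V) (hgen : GenericPoly V) (hcirc : IsCircumData V O R) :
    2 ≤ {i : ZMod n | GlobMax V O R i}.ncard ∧
    2 ≤ {i : ZMod n | GlobMin V O R i}.ncard ∧
    4 ≤ {i : ZMod n | GlobMax V O R i ∨ GlobMin V O R i}.ncard := by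
  have h1n : (1:ℕ) < n := by omega
  have h2n : (2:ℕ) < n := by omega
  have h3n : (3:ℕ) < n := by omega
  have hone : (1 : ZMod n) ≠ 0 := by
    have c1 : ((1:ℕ) : ZMod n) ≠ 0 := FourV.cast_ne_zero (by omega) h1n
    intro h; exact c1 (by push_cast; exact h)
  have htwo : (2 : ZMod n) ≠ 0 := by
    have c2 : ((2:ℕ) : ZMod n) ≠ 0 := FourV.cast_ne_zero (by omega) h2n
    intro h; exact c2 (by push_cast; exact h)
  have hthree : (3 : ZMod n) ≠ 0 := by
    have c3 : ((3:ℕ) : ZMod n) ≠ 0 := FourV.cast_ne_zero (by omega) h3n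
    intro h; exact c3 (by push_cast; exact h)
  have hdet : ∀ i : ZMod n, 0 < det2 (V (i-1)) (V i) (V (i+1)) := by
    intro i
    have h := FourV.chordside hconv (i - 1) (p := 1) (q := 2) le_rfl (by omega) h2n
    have e1 : (i - 1) + ((1:ℕ) : ZMod n) = i := by push_cast; ring
    have e2 : (i - 1) + ((2:ℕ) : ZMod n) = i + 1 := by push_cast; ring
    rwa [e1, e2] at h
  have hmax : ∀ i, FourV.EarW V 1 i → GlobMax V O R i := by
    intro i hear j
    obtain ⟨cc1, cc2, cc3⟩ := hcirc i
    have hp := hear j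
    rw [one_mul, FourV.p4_circum cc1 cc2 cc3] at hp
    have hR : 0 ≤ R i := by rw [← cc2]; exact dist_nonneg
    by_contra hcon
    push_neg at hcon
    have hd0 : 0 ≤ dist (V j) (O i) := dist_nonneg
    have hpos : 0 < R i ^ 2 - dist (V j) (O i) ^ 2 := by nlinarith
    nlinarith [mul_pos (hdet i) hpos]
  have hmin : ∀ i, FourV.EarW V (-1) i → GlobMin V O R i := by
    intro i hear j hj1 hj2 hj3
    obtain ⟨cc1, cc2, cc3⟩ := hcirc i
    have hp := hear j
    rw [FourV.p4_circum cc1 cc2 cc3] at hp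
    have hR : 0 ≤ R i := by rw [← cc2]; exact dist_nonneg
    have hd0 : 0 ≤ dist (V j) (O i) := dist_nonneg
    have h0 : 0 ≤ R i ^ 2 - dist (V j) (O i) ^ 2 := by nlinarith [hdet i]
    have hle : dist (V j) (O i) ≤ R i := by nlinarith
    rcases lt_or_eq_of_le hle with h | h
    · exact h
    · exfalso
      refine hgen.2 j (i-1) i (i+1) hj1 hj2 hj3
        (fun hh => hone (by linear_combination -hh))
        (fun hh => htwo (by linear_combination -hh))
        (fun hh => hone (by linear_combination -hh))
        ⟨O i, R i, h, cc1, cc2, cc3⟩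
  obtain ⟨i1, i2, h12, he1, he2⟩ := FourV.twoEars hconv 1 hn
  obtain ⟨i3, i4, h34, hf1, hf2⟩ := FourV.twoEars hconv (-1) hn
  have hsub1 : ({i1, i2} : Set (ZMod n)) ⊆ {i | GlobMax V O R i} := by
    intro x hx
    rcases hx with rfl | hx
    · exact hmax _ he1
    · rw [Set.mem_singleton_iff] at hx
      subst hx
      exact hmax _ he2
  have hsub2 : ({i3, i4} : Set (ZMod n)) ⊆ {i | GlobMin V O R i} := by
    intro x hx
    rcases hx with rfl | hx
    · exact hmin _ hf1
    · rw [Set.mem_singleton_iff] at hx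
      subst hx
      exact hmin _ hf2
  have hcard1 : 2 ≤ Set.ncard {i : ZMod n | GlobMax V O R i} := by
    calc 2 = ({i1, i2} : Set (ZMod n)).ncard := (Set.ncard_pair h12).symm
    _ ≤ _ := Set.ncard_le_ncard hsub1 (Set.toFinite _)
  have hcard2 : 2 ≤ Set.ncard {i : ZMod n | GlobMin V O R i} := by
    calc 2 = ({i3, i4} : Set (ZMod n)).ncard := (Set.ncard_pair h34).symm
    _ ≤ _ := Set.ncard_le_ncard hsub2 (Set.toFinite _)
  have hdisj : Disjoint {i : ZMod n | GlobMax V O R i} {i : ZMod n | GlobMin V O R i} := by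
    rw [Set.disjoint_left]
    intro i hM hm
    have hne1 : i + 2 ≠ i - 1 := fun hh => hthree (by linear_combination hh)
    have hne2 : i + 2 ≠ i := fun hh => htwo (by linear_combination hh)
    have hne3 : i + 2 ≠ i + 1 := fun hh => hone (by linear_combination hh)
    exact absurd (hM (i+2)) (not_le.mpr (hm (i+2) hne1 hne2 hne3))
  refine ⟨hcard1, hcard2, ?_⟩
  have hun : {i : ZMod n | GlobMax V O R i ∨ GlobMin V O R i}
      = {i : ZMod n | GlobMax V O R i} ∪ {i : ZMod n | GlobMin V O R i} := Set.setOf_or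
  rw [hun, Set.ncard_union_eq hdisj (Set.toFinite _) (Set.toFinite _)]
  omega
end

section
/- (Radial Four-Vertex Theorem) Every generic coherent convex polygon P with n ≥ 4 vertices has at least four radially extremal vertices; in fact r_-(P) ≥ 2 and r_+(P) ≥ 2. -/
open EuclideanGeometry
open scoped Classical

set_option maxHeartbeats 1000000
section ALLAUX
noncomputable section Aux

namespace R4V

lemma dist_sq_coords (X Y : Pt) : dist X Y ^ 2 = (X 0 - Y 0)^2 + (X 1 - Y 1)^2 := by
  rw [EuclideanSpace.dist_eq, Real.sq_sqrt (by positivity)]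
  simp [Fin.sum_univ_two, Real.dist_eq, sq_abs]

lemma dist_of_sq {X Y : Pt} {r : ℝ} (hr : 0 ≤ r) (h : dist X Y ^ 2 = r ^ 2) :
    dist X Y = r := by
  have h0 : (0:ℝ) ≤ dist X Y := dist_nonneg
  rcases mul_eq_zero.mp (show (dist X Y - r) * (dist X Y + r) = 0 by linear_combination h) with
    h' | h'
  · linarith
  · linarith

lemma det2_rot (a b c : Pt) : det2 a b c = det2 b c a := by simp only [det2]; ring

lemma det2_swap23 (a b c : Pt) : det2 a b c = - det2 a c b := by simp only [det2]; ring

lemma det2_self13 (a b : Pt) : det2 a b a = 0 := by simp only [det2]; ring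

lemma det2_self23 (a b : Pt) : det2 a b b = 0 := by simp only [det2]; ring

variable {n : ℕ} [NeZero n]

lemma zcast_inj {p q : ℕ} (hp : p < n) (hq : q < n) (h : (p : ZMod n) = q) : p = q := by
  have h1 := ZMod.val_cast_of_lt hp
  have h2 := ZMod.val_cast_of_lt hq
  rw [h] at h1; omega

lemma zcast_ne {p q : ℕ} (hp : p < n) (hq : q < n) (h : p ≠ q) : (p : ZMod n) ≠ q :=
  fun hh => h (zcast_inj hp hq hh)

lemma zadd_ne (i : ZMod n) {p q : ℕ} (hp : p < n) (hq : q < n) (h : p ≠ q) :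
    i + (p : ZMod n) ≠ i + q := by
  intro hh; exact zcast_ne hp hq h (by linear_combination hh)

lemma zrep (a k : ZMod n) : ∃ m : ℕ, m < n ∧ k = a + (m : ZMod n) :=
  ⟨(k - a).val, ZMod.val_lt _, by rw [ZMod.natCast_val, ZMod.cast_id]; ring⟩

lemma triplePos (hn : 4 ≤ n) (V : ZMod n → Pt) (hconv : ConvexCCW V) :
    ∀ q : ℕ, q ≤ n - 1 → ∀ (p : ℕ) (i : ZMod n), 1 ≤ p → p < q →
      0 < det2 (V i) (V (i + (p : ZMod n))) (V (i + (q : ZMod n))) := by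
  intro q
  induction q using Nat.strong_induction_on with
  | _ q IH =>
    intro hq p i hp1 hpq
    have hpn : p < n := by omega
    have hqn : q < n := by omega
    have hne_i_ip : i ≠ i + (p : ZMod n) := by
      have := zadd_ne (n := n) i (show 0 < n by omega) hpn (show 0 ≠ p by omega)
      simpa using this
    have hne_i_iq : i ≠ i + (q : ZMod n) := by
      have := zadd_ne (n := n) i (show 0 < n by omega) hqn (show 0 ≠ q by omega)
      simpa using this
    by_cases hcase1 : p + 1 = q
    · -- consecutive pair at positions p, q
      have hcast : (i + (p : ZMod n)) + 1 = i + (q : ZMod n) := by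
        rw [← hcase1]; push_cast; ring
      have h := hconv.2 (i + (p : ZMod n)) i hne_i_ip
        (by rw [hcast]; exact hne_i_iq)
      rw [hcast] at h
      rw [det2_rot]; exact h
    · by_cases hcase2 : p = 1
      · subst hcase2
        have h := hconv.2 i (i + (q : ZMod n)) hne_i_iq.symm
          (by
            have := zadd_ne (n := n) i hqn (show 1 < n by omega) (show q ≠ 1 by omega)
            simpa using this)
        simpa using h
        
      · -- general case : 2 ≤ p, p + 2 ≤ q
        have hp2 : 2 ≤ p := by omega
        have hq4 : 4 ≤ q := by omega
        have hq1n : q - 1 < n := by omega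
        have h1 : 0 < det2 (V i) (V (i + (p : ZMod n))) (V (i + ((q - 1 : ℕ) : ZMod n))) :=
          IH (q - 1) (by omega) (by omega) p i hp1 (by omega)
        have h2 : 0 < det2 (V i) (V (i + 1)) (V (i + (q : ZMod n))) :=
          hconv.2 i (i + (q : ZMod n)) hne_i_iq.symm
            (by
              have := zadd_ne (n := n) i hqn (show 1 < n by omega) (show q ≠ 1 by omega)
              simpa using this)
        have h3 : 0 < det2 (V i) (V (i + 1)) (V (i + ((q - 1 : ℕ) : ZMod n))) :=
          hconv.2 i (i + ((q - 1 : ℕ) : ZMod n))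
            (by
              have := zadd_ne (n := n) i hq1n (show 0 < n by omega) (show q - 1 ≠ 0 by omega)
              simpa using this)
            (by
              have := zadd_ne (n := n) i hq1n (show 1 < n by omega) (show q - 1 ≠ 1 by omega)
              simpa using this)
        have h4 : 0 < det2 (V i) (V (i + 1)) (V (i + (p : ZMod n))) :=
          hconv.2 i (i + (p : ZMod n)) hne_i_ip.symm
            (by
              have := zadd_ne (n := n) i hpn (show 1 < n by omega) (show p ≠ 1 by omega)
              simpa using this)
        have hcast2 : (i + ((q - 1 : ℕ) : ZMod n)) + 1 = i + (q : ZMod n) := by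
          have : ((q - 1 : ℕ) : ZMod n) = (q : ZMod n) - 1 := by
            have h1q : (1:ℕ) ≤ q := by omega
            push_cast [Nat.cast_sub h1q]
            ring
          rw [this]; ring
        have h5 : 0 < det2 (V (i + ((q - 1 : ℕ) : ZMod n))) (V (i + (q : ZMod n))) (V i) := by
          have h := hconv.2 (i + ((q - 1 : ℕ) : ZMod n)) i
            (by
              have := zadd_ne (n := n) i (show 0 < n by omega) hq1n (show 0 ≠ q - 1 by omega)
              simpa using this)
            (by rw [hcast2]; exact hne_i_iq)
          rw [hcast2] at h
          exact h
        have h5' : 0 < det2 (V i) (V (i + ((q - 1 : ℕ) : ZMod n))) (V (i + (q : ZMod n))) := by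
          rw [det2_rot]; exact h5
        set A := V i
        set X := V (i + (p : ZMod n))
        set K := V (i + ((q - 1 : ℕ) : ZMod n))
        set K' := V (i + (q : ZMod n))
        set Ev := V (i + 1)
        have gp : det2 A X K' * det2 A Ev K =
            det2 A X K * det2 A Ev K' + det2 A Ev X * det2 A K K' := by
          simp only [det2]; ring
        have hpos : 0 < det2 A X K' * det2 A Ev K := by
          rw [gp]
          have := mul_pos h1 h2
          have := mul_pos h4 h5'
          linarith
        by_contra hcon
        push_neg at hcon
        nlinarith [mul_nonneg (neg_nonneg.mpr hcon) h3.le]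

end R4V
end Aux
noncomputable section Alg
namespace R4V

lemma sq_lt_of (E2 g g' r r' : ℝ) (hE2 : 0 < E2) (hg : 0 ≤ g) (hg' : 0 ≤ g')
    (hR : E2 * r^2 = E2^2/4 + g^2) (hR' : E2 * r'^2 = E2^2/4 + g'^2)
    (hrp : 0 ≤ r) (hr'p : 0 ≤ r') (hlt : g < g') : r < r' := by
  have hsq : g^2 < g'^2 := by nlinarith
  by_contra hcc
  push_neg at hcc
  have h1 : r'^2 ≤ r^2 := pow_le_pow_left₀ hr'p hcc 2
  nlinarith [mul_le_mul_of_nonneg_left h1 hE2.le]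


lemma sign_core (E2 g g' d Q : ℝ) (hE2 : 0 < E2) (hd : 0 < d)
    (hQ : E2 * Q = 2*(g' - g)*d) :
    (0 < Q → g < g') ∧ (Q < 0 → g' < g) := by
  constructor
  · intro h
    by_contra hcc
    push_neg at hcc
    nlinarith [mul_pos hE2 h, mul_nonneg (sub_nonneg.mpr hcc) hd.le]
  · intro h
    by_contra hcc
    push_neg at hcc
    nlinarith [mul_pos hE2 (neg_pos.mpr h), mul_nonneg (sub_nonneg.mpr hcc) hd.le]

lemma edge_core (a0 a1 b0 b1 u0 u1 w0 w1 p0 p1 q0 q1 r r' s t s' t' : ℝ)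
    (hr1 : (a0-p0)^2 + (a1-p1)^2 = r^2)
    (hr2 : (b0-p0)^2 + (b1-p1)^2 = r^2)
    (hr3 : (a0-q0)^2 + (a1-q1)^2 = r'^2)
    (hr4 : (b0-q0)^2 + (b1-q1)^2 = r'^2)
    (hu : (u0-p0)^2 + (u1-p1)^2 = r^2)
    (hw : (w0-q0)^2 + (w1-q1)^2 = r'^2)
    (hrpos : 0 ≤ r) (hr'pos : 0 ≤ r')
    (hs : 0 ≤ s) (ht' : 0 ≤ t')
    (hc1 : p0 - a0 = s*(u0-a0) + t*(b0-a0)) (hc2 : p1 - a1 = s*(u1-a1) + t*(b1-a1))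
    (hc3 : q0 - b0 = s'*(a0-b0) + t'*(w0-b0)) (hc4 : q1 - b1 = s'*(a1-b1) + t'*(w1-b1))
    (hd1 : 0 < (b0-a0)*(u1-a1) - (b1-a1)*(u0-a0))
    (hd2 : 0 < (b0-a0)*(w1-a1) - (b1-a1)*(w0-a0)) :
    (0 < (w0-p0)^2+(w1-p1)^2 - r^2 → r < r') ∧
    ((w0-p0)^2+(w1-p1)^2 - r^2 < 0 → r' < r) ∧
    (0 < (u0-q0)^2+(u1-q1)^2 - r'^2 → r' < r) ∧
    ((u0-q0)^2+(u1-q1)^2 - r'^2 < 0 → r < r') := by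
  have hE2 : 0 < (b0-a0)^2 + (b1-a1)^2 := by
    by_contra hE
    push_neg at hE
    have h00 : (b0-a0)^2 = 0 := le_antisymm (by linarith [sq_nonneg (b1-a1)]) (by positivity)
    have h11 : (b1-a1)^2 = 0 := le_antisymm (by linarith [sq_nonneg (b0-a0)]) (by positivity)
    have h0 : b0 - a0 = 0 := by
      have := sq_eq_zero_iff.mp h00; simpa using this
    have h1 : b1 - a1 = 0 := by
      have := sq_eq_zero_iff.mp h11; simpa using this
    have : (b0-a0)*(u1-a1) - (b1-a1)*(u0-a0) = 0 := by rw [h0, h1]; ring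
    linarith
  have hγ : (b0-a0)*(p1-a1) - (b1-a1)*(p0-a0)
      = s * ((b0-a0)*(u1-a1) - (b1-a1)*(u0-a0)) := by
    linear_combination (b0-a0)*hc2 - (b1-a1)*hc1
  have hγ' : (b0-a0)*(q1-a1) - (b1-a1)*(q0-a0)
      = t' * ((b0-a0)*(w1-a1) - (b1-a1)*(w0-a0)) := by
    linear_combination (b0-a0)*hc4 - (b1-a1)*hc3
  have hγnn : 0 ≤ (b0-a0)*(p1-a1) - (b1-a1)*(p0-a0) := by
    rw [hγ]; exact mul_nonneg hs hd1.le
  have hγ'nn : 0 ≤ (b0-a0)*(q1-a1) - (b1-a1)*(q0-a0) := by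
    rw [hγ']; exact mul_nonneg ht' hd2.le
  have hR : ((b0-a0)^2+(b1-a1)^2) * r^2 = ((b0-a0)^2+(b1-a1)^2)^2/4
      + ((b0-a0)*(p1-a1) - (b1-a1)*(p0-a0))^2 := by
    linear_combination
      (((b0-a0)*(p0-(a0+b0)/2)+(b1-a1)*(p1-(a1+b1)/2))/2 - ((b0-a0)^2+(b1-a1)^2)/2) * hr1
      + (-((b0-a0)*(p0-(a0+b0)/2)+(b1-a1)*(p1-(a1+b1)/2))/2 - ((b0-a0)^2+(b1-a1)^2)/2) * hr2
  have hR' : ((b0-a0)^2+(b1-a1)^2) * r'^2 = ((b0-a0)^2+(b1-a1)^2)^2/4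
      + ((b0-a0)*(q1-a1) - (b1-a1)*(q0-a0))^2 := by
    linear_combination
      (((b0-a0)*(q0-(a0+b0)/2)+(b1-a1)*(q1-(a1+b1)/2))/2 - ((b0-a0)^2+(b1-a1)^2)/2) * hr3
      + (-((b0-a0)*(q0-(a0+b0)/2)+(b1-a1)*(q1-(a1+b1)/2))/2 - ((b0-a0)^2+(b1-a1)^2)/2) * hr4
  have hQw : ((b0-a0)^2+(b1-a1)^2) * ((w0-p0)^2+(w1-p1)^2 - r^2)
      = 2*(((b0-a0)*(q1-a1) - (b1-a1)*(q0-a0)) - ((b0-a0)*(p1-a1) - (b1-a1)*(p0-a0)))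
        * ((b0-a0)*(w1-a1) - (b1-a1)*(w0-a0)) := by
    linear_combination
      (-((b0-a0)*(w0-(a0+b0)/2)+(b1-a1)*(w1-(a1+b1)/2)) + ((b0-a0)^2+(b1-a1)^2)/2) * hr1
      + (((b0-a0)*(w0-(a0+b0)/2)+(b1-a1)*(w1-(a1+b1)/2)) + ((b0-a0)^2+(b1-a1)^2)/2) * hr2
      + (((b0-a0)*(w0-(a0+b0)/2)+(b1-a1)*(w1-(a1+b1)/2)) - ((b0-a0)^2+(b1-a1)^2)/2) * hr3
      + (-((b0-a0)*(w0-(a0+b0)/2)+(b1-a1)*(w1-(a1+b1)/2)) - ((b0-a0)^2+(b1-a1)^2)/2) * hr4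
      + ((b0-a0)^2+(b1-a1)^2) * hw
  have hQu : ((b0-a0)^2+(b1-a1)^2) * ((u0-q0)^2+(u1-q1)^2 - r'^2)
      = 2*(((b0-a0)*(p1-a1) - (b1-a1)*(p0-a0)) - ((b0-a0)*(q1-a1) - (b1-a1)*(q0-a0)))
        * ((b0-a0)*(u1-a1) - (b1-a1)*(u0-a0)) := by
    linear_combination
      (-((b0-a0)*(u0-(a0+b0)/2)+(b1-a1)*(u1-(a1+b1)/2)) + ((b0-a0)^2+(b1-a1)^2)/2) * hr3
      + (((b0-a0)*(u0-(a0+b0)/2)+(b1-a1)*(u1-(a1+b1)/2)) + ((b0-a0)^2+(b1-a1)^2)/2) * hr4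
      + (((b0-a0)*(u0-(a0+b0)/2)+(b1-a1)*(u1-(a1+b1)/2)) - ((b0-a0)^2+(b1-a1)^2)/2) * hr1
      + (-((b0-a0)*(u0-(a0+b0)/2)+(b1-a1)*(u1-(a1+b1)/2)) - ((b0-a0)^2+(b1-a1)^2)/2) * hr2
      + ((b0-a0)^2+(b1-a1)^2) * hu
  refine ⟨?_, ?_, ?_, ?_⟩
  · intro h
    exact sq_lt_of _ _ _ _ _ hE2 hγnn hγ'nn hR hR' hrpos hr'pos
      ((sign_core _ _ _ _ _ hE2 hd2 hQw).1 h)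
  · intro h
    exact sq_lt_of _ _ _ _ _ hE2 hγ'nn hγnn hR' hR hr'pos hrpos
      ((sign_core _ _ _ _ _ hE2 hd2 hQw).2 h)
  · intro h
    exact sq_lt_of _ _ _ _ _ hE2 hγ'nn hγnn hR' hR hr'pos hrpos
      ((sign_core _ _ _ _ _ hE2 hd1 hQu).1 h)
  · intro h
    exact sq_lt_of _ _ _ _ _ hE2 hγnn hγ'nn hR hR' hrpos hr'pos
      ((sign_core _ _ _ _ _ hE2 hd1 hQu).2 h)

end R4V
end Alg
noncomputable section Main

namespace R4V

variable {n : ℕ} [NeZero n]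

def Fc (α β γ : ℝ) (X : Pt) : ℝ := X 0 ^ 2 + X 1 ^ 2 - (α * X 0 + β * X 1 + γ)

lemma det2_swap12 (a b c : Pt) : det2 a b c = - det2 b a c := by simp only [det2]; ring

lemma circle_unique (α β γ : ℝ) (P1 P2 P3 Oc : Pt) (r : ℝ)
    (h1 : Fc α β γ P1 = 0) (h2 : Fc α β γ P2 = 0) (h3 : Fc α β γ P3 = 0)
    (hdet : det2 P1 P2 P3 ≠ 0)
    (e1 : dist P1 Oc ^ 2 = r ^ 2) (e2 : dist P2 Oc ^ 2 = r ^ 2)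
    (e3 : dist P3 Oc ^ 2 = r ^ 2) (X : Pt) :
    Fc α β γ X = dist X Oc ^ 2 - r ^ 2 := by
  rw [dist_sq_coords] at e1 e2 e3 ⊢
  set D : Pt → ℝ := fun Z => Fc α β γ Z - ((Z 0 - Oc 0)^2 + (Z 1 - Oc 1)^2 - r^2) with hD
  have d1 : D P1 = 0 := by simp only [hD]; rw [h1]; linarith
  have d2 : D P2 = 0 := by simp only [hD]; rw [h2]; linarith
  have d3 : D P3 = 0 := by simp only [hD]; rw [h3]; linarith
  have key : D X * det2 P1 P2 P3 =
      D P1 * det2 X P2 P3 + D P2 * det2 P1 X P3 + D P3 * det2 P1 P2 X := by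
    simp only [hD, Fc, det2]; ring
  rw [d1, d2, d3] at key
  have hDX : D X = 0 := by
    rcases mul_eq_zero.mp (by linarith [key] : D X * det2 P1 P2 P3 = 0) with h | h
    · exact h
    · exact absurd h hdet
  simp only [hD] at hDX
  linarith

lemma init_circle (hn : 4 ≤ n) (V : ZMod n → Pt) (hconv : ConvexCCW V)
    (ε : ℝ) (hε : ε = 1 ∨ ε = -1) (a : ZMod n) :
    ∃ α β γ : ℝ, Fc α β γ (V a) = 0 ∧ Fc α β γ (V (a + ((n - 1 : ℕ) : ZMod n))) = 0 ∧
      ∀ k : ZMod n, 0 ≤ ε * Fc α β γ (V k) := by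
  have hε2 : ε * ε = 1 := by rcases hε with rfl | rfl <;> norm_num
  have hab : a + ((n - 1 : ℕ) : ZMod n) = a - 1 := by
    have h : ((n - 1 : ℕ) : ZMod n) = -1 := by
      push_cast [Nat.cast_sub (show 1 ≤ n by omega)]
      rw [ZMod.natCast_self]; ring
    rw [h]; ring
  have hgneg : ∀ k : ZMod n, k ≠ a → k ≠ a + ((n - 1 : ℕ) : ZMod n) →
      det2 (V a) (V (a + ((n - 1 : ℕ) : ZMod n))) (V k) < 0 := by
    intro k hk1 hk2
    have hsub : a - 1 + 1 = a := by ring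
    have h := hconv.2 (a - 1) k (by rw [← hab]; exact hk2) (by rw [hsub]; exact hk1)
    rw [hsub] at h
    rw [hab, det2_swap12]
    linarith
  classical
  set S : Finset (ZMod n) := (Finset.univ.erase a).erase (a + ((n - 1 : ℕ) : ZMod n)) with hSdef
  have hmemS : ∀ k : ZMod n, k ≠ a → k ≠ a + ((n - 1 : ℕ) : ZMod n) → k ∈ S := by
    intro k hk1 hk2
    simp [hSdef, Finset.mem_erase, hk1, hk2]
  have hS : S.Nonempty := by
    refine ⟨a + 1, hmemS _ ?_ ?_⟩
    · have := zadd_ne (n := n) a (show 1 < n by omega) (show 0 < n by omega)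
        (show 1 ≠ 0 by omega)
      simpa using this
    · have := zadd_ne (n := n) a (show 1 < n by omega) (show n - 1 < n by omega)
        (show 1 ≠ n - 1 by omega)
      simpa using this
  set base : Pt → ℝ := fun X =>
    (X 0 - V a 0) * (X 0 - V (a + ((n - 1 : ℕ) : ZMod n)) 0)
      + (X 1 - V a 1) * (X 1 - V (a + ((n - 1 : ℕ) : ZMod n)) 1) with hbase
  set g : Pt → ℝ := fun X => det2 (V a) (V (a + ((n - 1 : ℕ) : ZMod n))) X with hg
  set M : ℝ := max (S.sup' hS (fun k => (-(ε * base (V k))) / (-(g (V k))))) 0 with hM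
  have hM0 : 0 ≤ M := le_max_right _ _
  set T : ℝ := -(ε * M) with hT
  set A := V a
  set B := V (a + ((n - 1 : ℕ) : ZMod n))
  refine ⟨A 0 + B 0 - T * (A 1 - B 1), A 1 + B 1 - T * (B 0 - A 0),
    -(A 0 * B 0) - A 1 * B 1 - T * (A 0 * B 1 - A 1 * B 0), ?_, ?_, ?_⟩
  · simp only [Fc]; ring
  · simp only [Fc]; ring
  · intro k
    have hFk : Fc (A 0 + B 0 - T * (A 1 - B 1)) (A 1 + B 1 - T * (B 0 - A 0))
        (-(A 0 * B 0) - A 1 * B 1 - T * (A 0 * B 1 - A 1 * B 0)) (V k)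
        = base (V k) + T * g (V k) := by
      simp only [Fc, hbase, hg, det2]; ring
    rw [hFk]
    by_cases hk1 : k = a
    · subst hk1
      have : base (V k) = 0 := by simp only [hbase]; ring
      have hgz : g (V k) = 0 := by simp only [hg]; exact det2_self13 _ _
      rw [this, hgz]; simp
    · by_cases hk2 : k = a + ((n - 1 : ℕ) : ZMod n)
      · rw [hk2]
        have : base (V (a + ((n - 1 : ℕ) : ZMod n))) = 0 := by simp only [hbase]; ring
        have hgz : g (V (a + ((n - 1 : ℕ) : ZMod n))) = 0 := by
          simp only [hg]; exact det2_self23 _ _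
        rw [this, hgz]; simp
      · have hgk : g (V k) < 0 := hgneg k hk1 hk2
        have hkS : k ∈ S := hmemS k hk1 hk2
        have hle : (-(ε * base (V k))) / (-(g (V k))) ≤ M :=
          le_trans (Finset.le_sup' (fun k => (-(ε * base (V k))) / (-(g (V k)))) hkS)
            (le_max_left _ _)
        have hle2 : -(ε * base (V k)) ≤ M * (-(g (V k))) := by
          rw [div_le_iff₀ (by linarith)] at hle
          linarith
        have expand : ε * (base (V k) + T * g (V k))
            = ε * base (V k) + M * (-(g (V k))) := by
          rw [hT]
          linear_combination (-(M * g (V k))) * hε2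
        rw [expand]
        linarith

end R4V
end Main
noncomputable section Rec

namespace R4V

variable {n : ℕ} [NeZero n]

lemma rec_emp (hn : 4 ≤ n) (V O : ZMod n → Pt) (R : ZMod n → ℝ)
    (hconv : ConvexCCW V) (hcirc : IsCircumData V O R)
    (ε : ℝ) (hε : ε = 1 ∨ ε = -1) :
    ∀ d : ℕ, 2 ≤ d → d ≤ n - 1 → ∀ (a : ZMod n) (α β γ : ℝ),
      Fc α β γ (V a) = 0 → Fc α β γ (V (a + (d : ZMod n))) = 0 →
      (∀ k : ZMod n, 0 ≤ ε * Fc α β γ (V k)) →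
      ∃ m : ℕ, 1 ≤ m ∧ m ≤ d - 1 ∧
        ∀ k : ZMod n,
          0 ≤ ε * (dist (V k) (O (a + (m : ZMod n))) ^ 2 - R (a + (m : ZMod n)) ^ 2) := by
  have hε2 : ε * ε = 1 := by rcases hε with rfl | rfl <;> norm_num
  have TP := triplePos hn V hconv
  intro d
  induction d using Nat.strong_induction_on with
  | _ d IH =>
  intro hd2 hdn a α β γ hFa hFb hall
  set b : ZMod n := a + ((d : ℕ) : ZMod n) with hbdef
  have garc : ∀ m : ℕ, 1 ≤ m → m ≤ d - 1 →
      0 < det2 (V b) (V a) (V (a + (m : ZMod n))) := by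
    intro m h1 h2
    have h := TP d (by omega) m a h1 (by omega)
    rw [← hbdef] at h
    rw [det2_rot]
    exact h
  have gout : ∀ m : ℕ, d < m → m ≤ n - 1 →
      det2 (V b) (V a) (V (a + (m : ZMod n))) < 0 := by
    intro m h1 h2
    have h := TP m h2 d a (by omega) h1
    rw [← hbdef] at h
    rw [det2_swap12]
    linarith
  obtain ⟨p, hpmem, hpmin⟩ := Finset.exists_min_image (Finset.Icc 1 (d - 1))
      (fun m : ℕ => ε * Fc α β γ (V (a + (m : ZMod n)))
        / det2 (V b) (V a) (V (a + (m : ZMod n))))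
      ⟨1, by simp only [Finset.mem_Icc]; omega⟩
  simp only [Finset.mem_Icc] at hpmem
  have hgp := garc p hpmem.1 hpmem.2
  set μ : ℝ := ε * Fc α β γ (V (a + (p : ZMod n)))
      / det2 (V b) (V a) (V (a + (p : ZMod n))) with hμdef
  have hμ0 : 0 ≤ μ := div_nonneg (hall _) hgp.le
  set lam : ℝ := ε * μ with hlamdef
  set α' := α + lam * (V b 1 - V a 1) with hα'
  set β' := β + lam * (V a 0 - V b 0) with hβ'
  set γ' := γ + lam * (V b 0 * V a 1 - V b 1 * V a 0) with hγ'
  have hF1 : ∀ X : Pt, Fc α' β' γ' X = Fc α β γ X - lam * det2 (V b) (V a) X := by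
    intro X; simp only [hα', hβ', hγ', Fc, det2]; ring
  have hF1a : Fc α' β' γ' (V a) = 0 := by
    rw [hF1, det2_self23, hFa]; ring
  have hF1b : Fc α' β' γ' (V b) = 0 := by
    rw [hF1, det2_self13, hFb]; ring
  have hF1p : Fc α' β' γ' (V (a + (p : ZMod n))) = 0 := by
    have hgne := ne_of_gt hgp
    rw [hF1, hlamdef, hμdef]
    rcases hε with rfl | rfl <;> field_simp <;> ring
  have hall1 : ∀ k : ZMod n, 0 ≤ ε * Fc α' β' γ' (V k) := by
    intro k
    obtain ⟨m, hmn, hk⟩ := zrep a k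
    subst hk
    have expand : ε * Fc α' β' γ' (V (a + (m : ZMod n)))
        = ε * Fc α β γ (V (a + (m : ZMod n)))
          - μ * det2 (V b) (V a) (V (a + (m : ZMod n))) := by
      rw [hF1, hlamdef]
      linear_combination (-(μ * det2 (V b) (V a) (V (a + (m : ZMod n))))) * hε2
    rcases (show m = 0 ∨ m = d ∨ (1 ≤ m ∧ m ≤ d - 1) ∨ (d < m ∧ m ≤ n - 1) by omega)
      with h | h | h | h
    · subst h
      simp only [Nat.cast_zero, add_zero]
      rw [hF1a]
      simp
    · subst h
      rw [← hbdef, hF1b]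
      simp
    · have hgm := garc m h.1 h.2
      have hmin := hpmin m (Finset.mem_Icc.mpr h)
      have hμg : μ * det2 (V b) (V a) (V (a + (m : ZMod n)))
          ≤ ε * Fc α β γ (V (a + (m : ZMod n))) := by
        rw [← le_div_iff₀ hgm]
        exact hmin
      rw [expand]
      linarith
    · have hgm := gout m h.1 h.2
      have h1 : 0 ≤ μ * (-(det2 (V b) (V a) (V (a + (m : ZMod n))))) :=
        mul_nonneg hμ0 (by linarith)
      have h2 := hall (a + (m : ZMod n))
      rw [expand]
      linarith
  rcases (show (p = 1 ∧ d = 2) ∨ 2 ≤ p ∨ (p = 1 ∧ 3 ≤ d) by omega)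
    with ⟨hp1, hdd⟩ | hp2 | ⟨hp1, hd3⟩
  · -- finish : d = 2, ear at a + 1
    subst hp1 hdd
    refine ⟨1, le_refl 1, by omega, ?_⟩
    intro k
    have hcast1 : ((1 : ℕ) : ZMod n) = (1 : ZMod n) := by push_cast; ring
    have hcast2 : b = (a + 1) + 1 := by rw [hbdef]; push_cast; ring
    have hsub : (a + 1) - 1 = a := by ring
    have hc := hcirc (a + 1)
    rw [hsub, ← hcast2] at hc
    have hR0 : 0 ≤ R (a + 1) := by rw [← hc.2.1]; exact dist_nonneg
    have e1 : dist (V a) (O (a + 1)) ^ 2 = R (a + 1) ^ 2 := by rw [hc.1]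
    have e2 : dist (V (a + 1)) (O (a + 1)) ^ 2 = R (a + 1) ^ 2 := by rw [hc.2.1]
    have e3 : dist (V b) (O (a + 1)) ^ 2 = R (a + 1) ^ 2 := by rw [hc.2.2]
    have hdet : det2 (V a) (V (a + 1)) (V b) ≠ 0 := by
      have hne1 : b ≠ a := by
        rw [hbdef]
        have := zadd_ne (n := n) a (show 2 < n by omega) (show 0 < n by omega)
          (show 2 ≠ 0 by omega)
        simpa using this
      have hne2 : b ≠ a + 1 := by
        rw [hbdef]
        have := zadd_ne (n := n) a (show 2 < n by omega) (show 1 < n by omega)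
          (show 2 ≠ 1 by omega)
        simpa using this
      exact ne_of_gt (hconv.2 a b hne1 hne2)
    have hF1p' : Fc α' β' γ' (V (a + 1)) = 0 := by
      rw [← hcast1]; exact hF1p
    have key := circle_unique α' β' γ' (V a) (V (a + 1)) (V b) (O (a + 1)) (R (a + 1))
      hF1a hF1p' hF1b hdet e1 e2 e3 (V k)
    rw [hcast1, ← key]
    exact hall1 k
  · -- recurse on left sub-arc (a, p)
    obtain ⟨m, hm1, hm2, hme⟩ := IH p (by omega) hp2 (by omega) a α' β' γ' hF1a hF1p hall1
    exact ⟨m, hm1, by omega, hme⟩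
  · -- recurse on right sub-arc (a+1, d-1)
    subst hp1
    have hcast1 : ((1 : ℕ) : ZMod n) = (1 : ZMod n) := by push_cast; ring
    have hstep : (a + ((1 : ℕ) : ZMod n)) + ((d - 1 : ℕ) : ZMod n) = b := by
      rw [hbdef]
      push_cast [Nat.cast_sub (show 1 ≤ d by omega)]
      ring
    obtain ⟨m, hm1, hm2, hme⟩ := IH (d - 1) (by omega) (by omega) (by omega)
      (a + ((1 : ℕ) : ZMod n)) α' β' γ' hF1p (by rw [hstep]; exact hF1b) hall1
    refine ⟨m + 1, by omega, by omega, ?_⟩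
    have hcast : a + ((m + 1 : ℕ) : ZMod n) = (a + ((1 : ℕ) : ZMod n)) + (m : ZMod n) := by
      push_cast; ring
    rw [hcast]
    exact hme

end R4V
end Rec
noncomputable section Ears

namespace R4V

variable {n : ℕ} [NeZero n]

lemma two_ears (hn : 4 ≤ n) (V O : ZMod n → Pt) (R : ZMod n → ℝ)
    (hconv : ConvexCCW V) (hcirc : IsCircumData V O R)
    (ε : ℝ) (hε : ε = 1 ∨ ε = -1) :
    ∃ j1 j2 : ZMod n, j1 ≠ j2 ∧
      (∀ k, 0 ≤ ε * (dist (V k) (O j1) ^ 2 - R j1 ^ 2)) ∧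
      (∀ k, 0 ≤ ε * (dist (V k) (O j2) ^ 2 - R j2 ^ 2)) := by
  have run : ∀ a : ZMod n, ∃ m : ℕ, 1 ≤ m ∧ m ≤ n - 2 ∧
      ∀ k, 0 ≤ ε * (dist (V k) (O (a + (m : ZMod n))) ^ 2 - R (a + (m : ZMod n)) ^ 2) := by
    intro a
    obtain ⟨α, β, γ, h1, h2, h3⟩ := init_circle hn V hconv ε hε a
    obtain ⟨m, hm1, hm2, hme⟩ := rec_emp hn V O R hconv hcirc ε hε (n - 1) (by omega)
      (by omega) a α β γ h1 h2 h3
    exact ⟨m, hm1, by omega, hme⟩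
  obtain ⟨m1, hm11, hm12, he1⟩ := run 0
  obtain ⟨m2, hm21, hm22, he2⟩ := run ((0 : ZMod n) + (m1 : ZMod n) + 1)
  refine ⟨(0 : ZMod n) + (m1 : ZMod n), (0 : ZMod n) + (m1 : ZMod n) + 1 + (m2 : ZMod n),
    ?_, he1, he2⟩
  intro h
  have hcc : ((0 : ℕ) : ZMod n) = ((m2 + 1 : ℕ) : ZMod n) := by
    push_cast
    linear_combination h
  exact absurd (zcast_inj (show 0 < n by omega) (show m2 + 1 < n by omega) hcc) (by omega)

lemma edge_ineq (hn : 4 ≤ n) (V O : ZMod n → Pt) (R : ZMod n → ℝ)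
    (hconv : ConvexCCW V) (hcirc : IsCircumData V O R) (hcoh : Coherent V O) (i : ZMod n) :
    (0 < dist (V (i + 2)) (O i) ^ 2 - R i ^ 2 → R i < R (i + 1)) ∧
    (dist (V (i + 2)) (O i) ^ 2 - R i ^ 2 < 0 → R (i + 1) < R i) ∧
    (0 < dist (V (i - 1)) (O (i + 1)) ^ 2 - R (i + 1) ^ 2 → R (i + 1) < R i) ∧
    (dist (V (i - 1)) (O (i + 1)) ^ 2 - R (i + 1) ^ 2 < 0 → R i < R (i + 1)) := by
  have hz1 : (1 : ZMod n) ≠ 0 := by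
    have := zcast_ne (n := n) (show 1 < n by omega) (show 0 < n by omega) (by omega)
    simpa using this
  have hz2 : (2 : ZMod n) ≠ 0 := by
    have := zcast_ne (n := n) (show 2 < n by omega) (show 0 < n by omega) (by omega)
    simpa using this
  obtain ⟨s, t, hs, ht, hco⟩ := hcoh i
  obtain ⟨s', t', hs', ht', hco'⟩ := hcoh (i + 1)
  have hi1 : i + 1 - 1 = i := by ring
  have hi2 : i + 1 + 1 = i + 2 := by ring
  rw [hi1, hi2] at hco'
  have hco0 := congrArg (fun v => v 0) hco
  have hco1 := congrArg (fun v => v 1) hco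
  have hco'0 := congrArg (fun v => v 0) hco'
  have hco'1 := congrArg (fun v => v 1) hco'
  simp only [PiLp.sub_apply, PiLp.add_apply, PiLp.smul_apply, smul_eq_mul]
    at hco0 hco1 hco'0 hco'1
  have hci := hcirc i
  have hci' := hcirc (i + 1)
  rw [hi1, hi2] at hci'
  have hr0 : 0 ≤ R i := by rw [← hci.2.1]; exact dist_nonneg
  have hr0' : 0 ≤ R (i + 1) := by rw [← hci'.2.1]; exact dist_nonneg
  have e_a : dist (V i) (O i) ^ 2 = R i ^ 2 := by rw [hci.2.1]
  have e_b : dist (V (i + 1)) (O i) ^ 2 = R i ^ 2 := by rw [hci.2.2]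
  have e_a' : dist (V i) (O (i + 1)) ^ 2 = R (i + 1) ^ 2 := by rw [hci'.1]
  have e_b' : dist (V (i + 1)) (O (i + 1)) ^ 2 = R (i + 1) ^ 2 := by rw [hci'.2.1]
  have e_u : dist (V (i - 1)) (O i) ^ 2 = R i ^ 2 := by rw [hci.1]
  have e_w : dist (V (i + 2)) (O (i + 1)) ^ 2 = R (i + 1) ^ 2 := by rw [hci'.2.2]
  rw [dist_sq_coords] at e_a e_b e_a' e_b' e_u e_w
  have hd1 : 0 < (V (i + 1) 0 - V i 0) * (V (i - 1) 1 - V i 1)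
      - (V (i + 1) 1 - V i 1) * (V (i - 1) 0 - V i 0) := by
    have hne1 : i - 1 ≠ i := fun h => hz1 (by linear_combination -h)
    have hne2 : i - 1 ≠ i + 1 := fun h => hz2 (by linear_combination -h)
    have := hconv.2 i (i - 1) hne1 hne2
    simpa [det2] using this
  have hd2 : 0 < (V (i + 1) 0 - V i 0) * (V (i + 2) 1 - V i 1)
      - (V (i + 1) 1 - V i 1) * (V (i + 2) 0 - V i 0) := by
    have hne1 : i + 2 ≠ i := fun h => hz2 (by linear_combination h)
    have hne2 : i + 2 ≠ i + 1 := fun h => hz1 (by linear_combination h)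
    have := hconv.2 i (i + 2) hne1 hne2
    simpa [det2] using this
  have core := edge_core (V i 0) (V i 1) (V (i + 1) 0) (V (i + 1) 1) (V (i - 1) 0)
    (V (i - 1) 1) (V (i + 2) 0) (V (i + 2) 1) (O i 0) (O i 1) (O (i + 1) 0) (O (i + 1) 1)
    (R i) (R (i + 1)) s t s' t' e_a e_b e_a' e_b' e_u e_w hr0 hr0' hs ht'
    hco0 hco1 hco'0 hco'1 hd1 hd2
  simpa only [dist_sq_coords] using core

lemma ear_radmin (hn : 4 ≤ n) (V O : ZMod n → Pt) (R : ZMod n → ℝ)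
    (hconv : ConvexCCW V) (hgen : GenericPoly V) (hcirc : IsCircumData V O R)
    (hcoh : Coherent V O) (j : ZMod n)
    (h : ∀ k, 0 ≤ dist (V k) (O j) ^ 2 - R j ^ 2) : RadMin R j := by
  have hz1 : (1 : ZMod n) ≠ 0 := by
    have := zcast_ne (n := n) (show 1 < n by omega) (show 0 < n by omega) (by omega)
    simpa using this
  have hz2 : (2 : ZMod n) ≠ 0 := by
    have := zcast_ne (n := n) (show 2 < n by omega) (show 0 < n by omega) (by omega)
    simpa using this
  have hz3 : (3 : ZMod n) ≠ 0 := by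
    have := zcast_ne (n := n) (show 3 < n by omega) (show 0 < n by omega) (by omega)
    simpa using this
  have hR0 : 0 ≤ R j := by rw [← (hcirc j).2.1]; exact dist_nonneg
  have hstrict : ∀ k : ZMod n, k ≠ j - 1 → k ≠ j → k ≠ j + 1 →
      0 < dist (V k) (O j) ^ 2 - R j ^ 2 := by
    intro k hk1 hk2 hk3
    rcases (h k).lt_or_eq with h' | h'
    · exact h'
    · exfalso
      have hdk : dist (V k) (O j) = R j := dist_of_sq hR0 (by linarith)
      exact hgen.2 (j - 1) j (j + 1) k
        (fun hh => hz1 (by linear_combination -hh))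
        (fun hh => hz2 (by linear_combination -hh))
        hk1.symm
        (fun hh => hz1 (by linear_combination -hh))
        hk2.symm
        hk3.symm
        ⟨O j, R j, (hcirc j).1, (hcirc j).2.1, (hcirc j).2.2, hdk⟩
  have h2 : 0 < dist (V (j + 2)) (O j) ^ 2 - R j ^ 2 :=
    hstrict (j + 2) (fun hh => hz3 (by linear_combination hh))
      (fun hh => hz2 (by linear_combination hh))
      (fun hh => hz1 (by linear_combination hh))
  have h2' : 0 < dist (V (j - 2)) (O j) ^ 2 - R j ^ 2 :=
    hstrict (j - 2) (fun hh => hz1 (by linear_combination -hh))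
      (fun hh => hz2 (by linear_combination -hh))
      (fun hh => hz3 (by linear_combination -hh))
  constructor
  · have e := (edge_ineq hn V O R hconv hcirc hcoh (j - 1)).2.2.1
    have c1 : j - 1 + 1 = j := by ring
    have c2 : j - 1 - 1 = j - 2 := by ring
    rw [c1, c2] at e
    exact e h2'
  · exact (edge_ineq hn V O R hconv hcirc hcoh j).1 h2

lemma ear_radmax (hn : 4 ≤ n) (V O : ZMod n → Pt) (R : ZMod n → ℝ)
    (hconv : ConvexCCW V) (hgen : GenericPoly V) (hcirc : IsCircumData V O R)
    (hcoh : Coherent V O) (j : ZMod n)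
    (h : ∀ k, dist (V k) (O j) ^ 2 - R j ^ 2 ≤ 0) : RadMax R j := by
  have hz1 : (1 : ZMod n) ≠ 0 := by
    have := zcast_ne (n := n) (show 1 < n by omega) (show 0 < n by omega) (by omega)
    simpa using this
  have hz2 : (2 : ZMod n) ≠ 0 := by
    have := zcast_ne (n := n) (show 2 < n by omega) (show 0 < n by omega) (by omega)
    simpa using this
  have hz3 : (3 : ZMod n) ≠ 0 := by
    have := zcast_ne (n := n) (show 3 < n by omega) (show 0 < n by omega) (by omega)
    simpa using this
  have hR0 : 0 ≤ R j := by rw [← (hcirc j).2.1]; exact dist_nonneg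
  have hstrict : ∀ k : ZMod n, k ≠ j - 1 → k ≠ j → k ≠ j + 1 →
      dist (V k) (O j) ^ 2 - R j ^ 2 < 0 := by
    intro k hk1 hk2 hk3
    rcases (h k).lt_or_eq with h' | h'
    · exact h'
    · exfalso
      have hdk : dist (V k) (O j) = R j := dist_of_sq hR0 (by linarith)
      exact hgen.2 (j - 1) j (j + 1) k
        (fun hh => hz1 (by linear_combination -hh))
        (fun hh => hz2 (by linear_combination -hh))
        hk1.symm
        (fun hh => hz1 (by linear_combination -hh))
        hk2.symm
        hk3.symm
        ⟨O j, R j, (hcirc j).1, (hcirc j).2.1, (hcirc j).2.2, hdk⟩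
  have h2 : dist (V (j + 2)) (O j) ^ 2 - R j ^ 2 < 0 :=
    hstrict (j + 2) (fun hh => hz3 (by linear_combination hh))
      (fun hh => hz2 (by linear_combination hh))
      (fun hh => hz1 (by linear_combination hh))
  have h2' : dist (V (j - 2)) (O j) ^ 2 - R j ^ 2 < 0 :=
    hstrict (j - 2) (fun hh => hz1 (by linear_combination -hh))
      (fun hh => hz2 (by linear_combination -hh))
      (fun hh => hz3 (by linear_combination -hh))
  constructor
  · have e := (edge_ineq hn V O R hconv hcirc hcoh (j - 1)).2.2.2
    have c1 : j - 1 + 1 = j := by ring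
    have c2 : j - 1 - 1 = j - 2 := by ring
    rw [c1, c2] at e
    exact e h2'
  · exact (edge_ineq hn V O R hconv hcirc hcoh j).2.1 h2

end R4V
end Ears
end ALLAUX

/-- Radial Four-Vertex Theorem: every generic coherent convex polygon with at least four
vertices has at least two radially maximal-extremal and two radially minimal-extremal
vertices, hence at least four radially extremal vertices. -/
theorem radial_four_vertex
    (n : ℕ) [NeZero n] (hn : 4 ≤ n)
    (V O : ZMod n → Pt) (R : ZMod n → ℝ)
    (hconv : ConvexCCW V) (hgen : GenericPoly V) (hcirc : IsCircumData V O R)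
    (hcoh : Coherent V O) :
    2 ≤ {i : ZMod n | RadMax R i}.ncard ∧
    2 ≤ {i : ZMod n | RadMin R i}.ncard ∧
    4 ≤ {i : ZMod n | RadMax R i ∨ RadMin R i}.ncard := by
  classical
  obtain ⟨j1, j2, hj12, hj1, hj2⟩ := R4V.two_ears hn V O R hconv hcirc 1 (Or.inl rfl)
  obtain ⟨k1, k2, hk12, hk1, hk2⟩ := R4V.two_ears hn V O R hconv hcirc (-1) (Or.inr rfl)
  have hmin1 : RadMin R j1 :=
    R4V.ear_radmin hn V O R hconv hgen hcirc hcoh j1 (fun k => by linarith [hj1 k])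
  have hmin2 : RadMin R j2 :=
    R4V.ear_radmin hn V O R hconv hgen hcirc hcoh j2 (fun k => by linarith [hj2 k])
  have hmax1 : RadMax R k1 :=
    R4V.ear_radmax hn V O R hconv hgen hcirc hcoh k1 (fun k => by nlinarith [hk1 k])
  have hmax2 : RadMax R k2 :=
    R4V.ear_radmax hn V O R hconv hgen hcirc hcoh k2 (fun k => by nlinarith [hk2 k])
  have hdisj : ∀ x : ZMod n, RadMax R x → RadMin R x → False := by
    intro x h1 h2
    have := h1.1
    have := h2.1
    linarith
  have hk1j1 : k1 ≠ j1 := fun h => hdisj j1 (h ▸ hmax1) hmin1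
  have hk1j2 : k1 ≠ j2 := fun h => hdisj j2 (h ▸ hmax1) hmin2
  have hk2j1 : k2 ≠ j1 := fun h => hdisj j1 (h ▸ hmax2) hmin1
  have hk2j2 : k2 ≠ j2 := fun h => hdisj j2 (h ▸ hmax2) hmin2
  refine ⟨?_, ?_, ?_⟩
  · have hsub : ({k1, k2} : Set (ZMod n)) ⊆ {i : ZMod n | RadMax R i} := by
      intro x hx
      simp only [Set.mem_insert_iff, Set.mem_singleton_iff] at hx
      rcases hx with rfl | rfl
      · exact hmax1
      · exact hmax2
    calc 2 = ({k1, k2} : Set (ZMod n)).ncard := (Set.ncard_pair hk12).symm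
      _ ≤ _ := Set.ncard_le_ncard hsub (Set.toFinite _)
  · have hsub : ({j1, j2} : Set (ZMod n)) ⊆ {i : ZMod n | RadMin R i} := by
      intro x hx
      simp only [Set.mem_insert_iff, Set.mem_singleton_iff] at hx
      rcases hx with rfl | rfl
      · exact hmin1
      · exact hmin2
    calc 2 = ({j1, j2} : Set (ZMod n)).ncard := (Set.ncard_pair hj12).symm
      _ ≤ _ := Set.ncard_le_ncard hsub (Set.toFinite _)
  · have hsub : ({k1, k2, j1, j2} : Set (ZMod n)) ⊆ {i : ZMod n | RadMax R i ∨ RadMin R i} := by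
      intro x hx
      simp only [Set.mem_insert_iff, Set.mem_singleton_iff] at hx
      rcases hx with rfl | rfl | rfl | rfl
      · exact Or.inl hmax1
      · exact Or.inl hmax2
      · exact Or.inr hmin1
      · exact Or.inr hmin2
    have hcard : ({k1, k2, j1, j2} : Set (ZMod n)).ncard = 4 := by
      rw [Set.ncard_insert_of_notMem (by
            simp only [Set.mem_insert_iff, Set.mem_singleton_iff]
            push_neg
            exact ⟨hk12, hk1j1, hk1j2⟩),
          Set.ncard_insert_of_notMem (by
            simp only [Set.mem_insert_iff, Set.mem_singleton_iff]
            push_neg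
            exact ⟨hk2j1, hk2j2⟩),
          Set.ncard_pair hj12]
    calc 4 = ({k1, k2, j1, j2} : Set (ZMod n)).ncard := hcard.symm
      _ ≤ _ := Set.ncard_le_ncard hsub (Set.toFinite _)
end
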